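/- Let G be a connected locally finite simple graph and let D ⊆ E(G) be an edge set whose intersection with every bond of G is finite and of even cardinality. Then every edge e ∈ D lies in a finite circuit C of G with C ⊆ D. -/

import Mathlib

open Set

variable {V : Type*}

/-- The edge set of a cycle of `G` (a finite circuit). -/
def IsCircuit (G : SimpleGraph V) (C : Set (Sym2 V)) : Prop :=
  ∃ (v : V) (w : G.Walk v v), w.IsCycle ∧ C = {e | e ∈ w.edges}

/-- The cut `E(A, V∖A)`: edges of `G` with exactly one endvertex in `A`. -/
def cutEdges (G : SimpleGraph V) (A : Set V) : Set (Sym2 V) :=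
  {e | ∃ x y, G.Adj x y ∧ x ∈ A ∧ y ∉ A ∧ e = s(x, y)}

/-- `C` is a cut of `G`. -/
def IsCut (G : SimpleGraph V) (C : Set (Sym2 V)) : Prop :=
  ∃ A : Set V, C = cutEdges G A

/-- A bond is a ⊆-minimal nonempty cut. -/
def IsBond (G : SimpleGraph V) (B : Set (Sym2 V)) : Prop :=
  IsCut G B ∧ B ≠ ∅ ∧ ∀ C, IsCut G C → C ≠ ∅ → C ⊆ B → C = B

/-- Two edge sets are orthogonal: their intersection is finite and of even cardinality. -/
def EvenInter (D F : Set (Sym2 V)) : Prop :=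
  (D ∩ F).Finite ∧ Even (D ∩ F).ncard

/-- A ray in `G`. -/
def IsRay (G : SimpleGraph V) (R : ℕ → V) : Prop :=
  Function.Injective R ∧ ∀ n, G.Adj (R n) (R (n + 1))

/-- A double ray in `G`. -/
def IsDoubleRay (G : SimpleGraph V) (R : ℤ → V) : Prop :=
  Function.Injective R ∧ ∀ n, G.Adj (R n) (R (n + 1))

/-- The edge set of a double ray. -/
def doubleRayEdges (R : ℤ → V) : Set (Sym2 V) :=
  {e | ∃ n : ℤ, e = s(R n, R (n + 1))}

/-- `D` is the edge set of some double ray of `G`. -/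
def IsDoubleRayEdgeSet (G : SimpleGraph V) (D : Set (Sym2 V)) : Prop :=
  ∃ R : ℤ → V, IsDoubleRay G R ∧ D = doubleRayEdges R

/-- `a` and `b` are joined by a walk of `G` all of whose vertices avoid `S`,
i.e. they lie in a common component of `G − S`. -/
def ConnAvoiding (G : SimpleGraph V) (S : Set V) (a b : V) : Prop :=
  ∃ w : G.Walk a b, ∀ x ∈ w.support, x ∉ S

/-- `v` lies in `C(S,R)`, the component of `G − S` containing a tail of the ray `R`. -/
def InC (G : SimpleGraph V) (S : Set V) (R : ℕ → V) (v : V) : Prop :=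
  ∃ m : ℕ, (∀ n, R (m + n) ∉ S) ∧ ConnAvoiding G S v (R m)

/-- The rays `R` and `R'` are equivalent (lie in the same end): for every finite `S`
some component of `G − S` contains a tail of both. -/
def RayEquiv (G : SimpleGraph V) (R R' : ℕ → V) : Prop :=
  ∀ S : Set V, S.Finite → ∃ m m', (∀ n, R (m + n) ∉ S) ∧ (∀ n, R' (m' + n) ∉ S) ∧
    ConnAvoiding G S (R m) (R' m')

/-- The sequence `v` of vertices converges to the end of the ray `R`: for every finite `S`
all but finitely many `v i` lie in `C(S,R)`. -/
def ConvergesTo (G : SimpleGraph V) (R : ℕ → V) (v : ℕ → V) : Prop :=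
  ∀ S : Set V, S.Finite → {i : ℕ | ¬ InC G S R (v i)}.Finite

/-- `F` is the vertex set of a `k`-fan from `u` to `Y`: a union of `k` paths starting
at `u`, pairwise sharing no vertex other than `u`, ending in `k` distinct vertices of `Y`. -/
def IsFan (G : SimpleGraph V) (k : ℕ) (u : V) (Y : Set V) (F : Set V) : Prop :=
  ∃ (ends : Fin k → V) (P : ∀ i, G.Walk u (ends i)),
    (∀ i, (P i).IsPath) ∧ (∀ i, ends i ∈ Y) ∧ Function.Injective ends ∧
    (∀ i j, i ≠ j → ∀ x, x ∈ (P i).support → x ∈ (P j).support → x = u) ∧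
    F = ⋃ i, {x | x ∈ (P i).support}

/-- `L` is the vertex set of a `k`-linkage from `x` to `y`: a union of `k` paths from
`x` to `y` pairwise sharing no vertices other than `x` and `y`. -/
def IsLinkage (G : SimpleGraph V) (k : ℕ) (x y : V) (L : Set V) : Prop :=
  ∃ P : Fin k → G.Walk x y,
    (∀ i, (P i).IsPath) ∧ Function.Injective P ∧
    (∀ i j, i ≠ j → ∀ z, z ∈ (P i).support → z ∈ (P j).support → z = x ∨ z = y) ∧
    L = ⋃ i, {z | z ∈ (P i).support}

/-- The end represented by the ray `R` is `k`-padded: for every equivalent ray `R'`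
there is a finite `S` such that every vertex of `C(S,R')` admits a `k`-fan to the
image of `R'` in `G`. -/
def IsPaddedEnd (G : SimpleGraph V) (k : ℕ) (R : ℕ → V) : Prop :=
  ∀ R' : ℕ → V, IsRay G R' → RayEquiv G R R' →
    ∃ S : Set V, S.Finite ∧ ∀ v, InC G S R' v → ∃ F, IsFan G k v (Set.range R') F

/-- `G` is `k`-padded at infinity: every end of `G` is `k`-padded. -/
def PaddedAtInfinity (G : SimpleGraph V) (k : ℕ) : Prop :=
  ∀ R : ℕ → V, IsRay G R → IsPaddedEnd G k R

/-- `G` is `k`-connected: it has more than `k` vertices and deleting fewer than `k`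
vertices leaves it connected. -/
def KConnected (G : SimpleGraph V) (k : ℕ) : Prop :=
  (k : ℕ∞) < (Set.univ : Set V).encard ∧
  ∀ S : Set V, S.Finite → S.ncard < k → (G.induce (Sᶜ : Set V)).Connected

/-- The algebraic cycle space: edge sets meeting every vertex in an even number of edges. -/
def CAlg (G : SimpleGraph V) : Set (Set (Sym2 V)) :=
  {D | D ⊆ G.edgeSet ∧ ∀ v : V, {e ∈ D | v ∈ e}.Finite ∧ Even {e ∈ D | v ∈ e}.ncard}

/-- The finite-cycle space: symmetric-difference sums of finitely many finite circuits. -/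
def CFin (G : SimpleGraph V) : Set (Set (Sym2 V)) :=
  {D | ∃ l : List (Set (Sym2 V)), (∀ C ∈ l, IsCircuit G C) ∧ D = l.foldr symmDiff ∅}

section AuxStmt16

/-- The spanning subgraph with edge set `D \ {e}`. -/
private def subG (G : SimpleGraph V) (D : Set (Sym2 V)) (e : Sym2 V) : SimpleGraph V where
  Adj u v := G.Adj u v ∧ s(u, v) ∈ D ∧ s(u, v) ≠ e
  symm := by
    constructor
    intro u v h
    refine ⟨h.1.symm, ?_, ?_⟩ <;> rw [Sym2.eq_swap]
    · exact h.2.1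
    · exact h.2.2
  loopless := ⟨fun _ h => G.irrefl h.1⟩

/-- The graph `G - A` (edges with both ends outside `A`). -/
private def avoidG (G : SimpleGraph V) (A : Set V) : SimpleGraph V where
  Adj u v := G.Adj u v ∧ u ∉ A ∧ v ∉ A
  symm := ⟨fun u v h => ⟨h.1.symm, h.2.2, h.2.1⟩⟩
  loopless := ⟨fun _ h => G.irrefl h.1⟩

private lemma reach_of_mem_support {G : SimpleGraph V} :
    ∀ {a b : V} (w : G.Walk a b), ∀ z ∈ w.support, G.Reachable a z := by
  intro a b w
  induction w with
  | nil =>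
    intro z hz
    rw [SimpleGraph.Walk.support_nil, List.mem_singleton] at hz
    subst hz; exact SimpleGraph.Reachable.refl _
  | cons h p ih =>
    intro z hz
    rw [SimpleGraph.Walk.support_cons, List.mem_cons] at hz
    rcases hz with rfl | hz
    · exact SimpleGraph.Reachable.refl _
    · exact (h.reachable).trans (ih z hz)

private lemma notMem_cutEdges_of_iff {G : SimpleGraph V} {A : Set V} {a b : V}
    (hiff : a ∈ A ↔ b ∈ A) : s(a, b) ∉ cutEdges G A := by
  rintro ⟨u, v, _, hu, hv, heq⟩
  rcases Sym2.eq_iff.mp heq with ⟨rfl, rfl⟩ | ⟨rfl, rfl⟩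
  · exact hv (hiff.mp hu)
  · exact hv (hiff.mpr hu)

private lemma mem_cutEdges_of_adj {G : SimpleGraph V} {A : Set V} {a b : V}
    (hadj : G.Adj a b) (hne : ¬ (a ∈ A ↔ b ∈ A)) : s(a, b) ∈ cutEdges G A := by
  by_cases ha : a ∈ A
  · have hb : b ∉ A := fun hb => hne ⟨fun _ => hb, fun _ => ha⟩
    exact ⟨a, b, hadj, ha, hb, rfl⟩
  · have hb : b ∈ A := by
      by_contra hb
      exact hne ⟨fun h => absurd h ha, fun h => absurd h hb⟩
    exact ⟨b, a, hadj.symm, hb, ha, Sym2.eq_swap⟩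

/-- Walks whose edges avoid a cut stay on one side of the cut. -/
private lemma walk_side {G : SimpleGraph V} {A : Set V} :
    ∀ {a b : V} (w : G.Walk a b), (∀ f ∈ w.edges, f ∉ cutEdges G A) → (a ∈ A ↔ b ∈ A) := by
  intro a b w
  induction w with
  | nil => intro _; rfl
  | cons h p ih =>
    intro hw
    have h1 : ¬ _ ∈ cutEdges G A := hw _ (by rw [SimpleGraph.Walk.edges_cons]; exact List.mem_cons_self)
    have h2 := ih (fun f hf => hw f (by rw [SimpleGraph.Walk.edges_cons]; exact List.mem_cons_of_mem _ hf))
    refine Iff.trans ?_ h2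
    by_contra hcon
    exact h1 (mem_cutEdges_of_adj h hcon)

end AuxStmt16


section AuxStmt16b

private lemma subG_adj {G : SimpleGraph V} {D : Set (Sym2 V)} {e : Sym2 V} {u v : V} :
    (subG G D e).Adj u v ↔ G.Adj u v ∧ s(u, v) ∈ D ∧ s(u, v) ≠ e := Iff.rfl

private lemma avoidG_adj {G : SimpleGraph V} {A : Set V} {u v : V} :
    (avoidG G A).Adj u v ↔ G.Adj u v ∧ u ∉ A ∧ v ∉ A := Iff.rfl

/-- The vertex set reachable from `x` using edges of `D` other than `s(x,y)`. -/
private def Aset (G : SimpleGraph V) (D : Set (Sym2 V)) (x y : V) : Set V :=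
  {v | (subG G D s(x, y)).Reachable x v}

/-- The component of `y` in `G - Aset`. -/
private def Bset (G : SimpleGraph V) (D : Set (Sym2 V)) (x y : V) : Set V :=
  {v | (avoidG G (Aset G D x y)).Reachable y v}

private lemma mem_Aset {G : SimpleGraph V} {D : Set (Sym2 V)} {x y v : V} :
    v ∈ Aset G D x y ↔ (subG G D s(x, y)).Reachable x v := Iff.rfl

private lemma mem_Bset {G : SimpleGraph V} {D : Set (Sym2 V)} {x y v : V} :
    v ∈ Bset G D x y ↔ (avoidG G (Aset G D x y)).Reachable y v := Iff.rfl

private lemma Bset_disjoint_Aset {G : SimpleGraph V} {D : Set (Sym2 V)} {x y : V}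
    (hyA : y ∉ Aset G D x y) : ∀ v ∈ Bset G D x y, v ∉ Aset G D x y := by
  have key : ∀ {a b : V} (w : (avoidG G (Aset G D x y)).Walk a b),
      a ∉ Aset G D x y → b ∉ Aset G D x y := by
    intro a b w
    induction w with
    | nil => exact id
    | cons h p ih => intro _; exact ih (avoidG_adj.mp h).2.2
  intro v hv
  obtain ⟨w⟩ := mem_Bset.mp hv
  exact key w hyA

end AuxStmt16b

/-- In a connected locally finite graph, every edge of an edge set having finite even
intersection with every bond lies in a finite circuit contained in that edge set. -/
theorem stmt_16 (G : SimpleGraph V) (hconn : G.Connected)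
    (hlf : ∀ x : V, (G.neighborSet x).Finite)
    (D : Set (Sym2 V)) (hD : D ⊆ G.edgeSet)
    (h : ∀ B, IsBond G B → EvenInter D B) :
    ∀ e ∈ D, ∃ C, IsCircuit G C ∧ e ∈ C ∧ C ⊆ D := by
  classical
  intro e he
  revert he
  induction e using Sym2.ind with
  | _ x y =>
  intro he
  have hxy : G.Adj x y := hD he
  by_cases hyA : (subG G D s(x, y)).Reachable x y
  · -- `x` and `y` are joined by a path in `D \ {e}`; close it up into a cycle.
    obtain ⟨w⟩ := hyA
    have hedges : ∀ f ∈ w.edges, f ∈ D ∧ f ≠ s(x, y) ∧ f ∈ G.edgeSet := by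
      intro f hf
      have hfH := w.edges_subset_edgeSet hf
      clear hf
      revert hfH
      induction f using Sym2.ind with
      | _ a b =>
        intro hfH
        rw [SimpleGraph.mem_edgeSet] at hfH
        rw [subG_adj] at hfH
        exact ⟨hfH.2.1, hfH.2.2, hfH.1⟩
    have hwG : ∀ f ∈ w.edges, f ∈ G.edgeSet := fun f hf => (hedges f hf).2.2
    set p := (w.transfer G hwG).toPath with hp
    have hpe : ∀ f ∈ (p : G.Walk x y).edges, f ∈ D ∧ f ≠ s(x, y) := by
      intro f hf
      have hf2 : f ∈ (w.transfer G hwG).edges := SimpleGraph.Walk.edges_toPath_subset _ hf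
      rw [SimpleGraph.Walk.edges_transfer] at hf2
      exact ⟨(hedges f hf2).1, (hedges f hf2).2.1⟩
    have hnotin : s(y, x) ∉ (p : G.Walk x y).edges := by
      intro hmem
      exact (hpe _ hmem).2 Sym2.eq_swap
    have hcyc := SimpleGraph.Path.cons_isCycle p hxy.symm hnotin
    refine ⟨{f | f ∈ (SimpleGraph.Walk.cons hxy.symm (p : G.Walk x y)).edges},
      ⟨y, _, hcyc, rfl⟩, ?_, ?_⟩
    · show s(x, y) ∈ (SimpleGraph.Walk.cons hxy.symm (p : G.Walk x y)).edges
      rw [SimpleGraph.Walk.edges_cons, Sym2.eq_swap]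
      exact List.mem_cons_self
    · intro f hf
      have hf' : f ∈ (SimpleGraph.Walk.cons hxy.symm (p : G.Walk x y)).edges := hf
      rw [SimpleGraph.Walk.edges_cons, List.mem_cons] at hf'
      rcases hf' with rfl | hf'
      · rwa [Sym2.eq_swap]
      · exact (hpe f hf').1
  · -- Otherwise `cutEdges G B` is a bond meeting `D` exactly in `e`: contradiction.
    exfalso
    have hyA' : y ∉ Aset G D x y := hyA
    have hBnA : ∀ v ∈ Bset G D x y, v ∉ Aset G D x y := Bset_disjoint_Aset hyA'
    have hxA : x ∈ Aset G D x y := mem_Aset.mpr (SimpleGraph.Reachable.refl x)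
    have hyB : y ∈ Bset G D x y := mem_Bset.mpr (SimpleGraph.Reachable.refl y)
    have hxB : x ∉ Bset G D x y := fun hh => hBnA x hh hxA
    have heF : s(x, y) ∈ cutEdges G (Bset G D x y) :=
      ⟨y, x, hxy.symm, hyB, hxB, Sym2.eq_swap⟩
    -- the intersection of `D` with the cut is exactly `{e}`
    have hDF : D ∩ cutEdges G (Bset G D x y) = {s(x, y)} := by
      apply Set.Subset.antisymm
      · rintro f ⟨hfD, u, v, hadj, huB, hvB, rfl⟩
        rw [Set.mem_singleton_iff]
        by_cases hvA : v ∈ Aset G D x y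
        · by_contra hne
          have hAdjH : (subG G D s(x, y)).Adj v u :=
            subG_adj.mpr ⟨hadj.symm, by rw [Sym2.eq_swap]; exact hfD,
              by rw [Sym2.eq_swap]; exact hne⟩
          have huA : u ∈ Aset G D x y :=
            mem_Aset.mpr ((mem_Aset.mp hvA).trans hAdjH.reachable)
          exact hBnA u huB huA
        · have hKadj : (avoidG G (Aset G D x y)).Adj u v :=
            avoidG_adj.mpr ⟨hadj, hBnA u huB, hvA⟩
          exact absurd (mem_Bset.mpr ((mem_Bset.mp huB).trans hKadj.reachable)) hvB
      · intro f hf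
        rw [Set.mem_singleton_iff] at hf
        subst hf
        exact ⟨he, heF⟩
    -- every vertex of `B` is joined to `y` by a walk inside `B`
    have hBwalk : ∀ u ∈ Bset G D x y, ∃ w : G.Walk y u, ∀ z ∈ w.support, z ∈ Bset G D x y := by
      intro u hu
      obtain ⟨w⟩ := mem_Bset.mp hu
      have hKG : ∀ f ∈ w.edges, f ∈ G.edgeSet := by
        intro f hf
        have hfK := w.edges_subset_edgeSet hf
        clear hf
        revert hfK
        induction f using Sym2.ind with
        | _ a b =>
          intro hfK
          rw [SimpleGraph.mem_edgeSet] at hfK ⊢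
          exact (avoidG_adj.mp hfK).1
      refine ⟨w.transfer G hKG, ?_⟩
      intro z hz
      rw [SimpleGraph.Walk.support_transfer] at hz
      exact mem_Bset.mpr (reach_of_mem_support w z hz)
    -- every vertex outside `B` is joined to `x` by a walk outside `B`
    have hBcwalk : ∀ v, v ∉ Bset G D x y →
        ∃ w : G.Walk v x, ∀ z ∈ w.support, z ∉ Bset G D x y := by
      have claim : ∀ ⦃v t : V⦄ (w : G.Walk v t), v ∉ Bset G D x y → x = t →
          ∃ w' : G.Walk v x, ∀ z ∈ w'.support, z ∉ Bset G D x y := by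
        intro v t w
        induction w with
        | nil =>
          rintro _ rfl
          refine ⟨SimpleGraph.Walk.nil, ?_⟩
          intro z hz
          rw [SimpleGraph.Walk.support_nil, List.mem_singleton] at hz
          subst hz
          exact hxB
        | @cons v' u' t' h p ih =>
          rintro hvB rfl
          by_cases hvA : v' ∈ Aset G D x y
          · obtain ⟨wH⟩ := mem_Aset.mp hvA
            have hHG : ∀ f ∈ wH.edges, f ∈ G.edgeSet := by
              intro f hf
              have hfH := wH.edges_subset_edgeSet hf
              clear hf
              revert hfH
              induction f using Sym2.ind with
              | _ a b =>
                intro hfH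
                rw [SimpleGraph.mem_edgeSet] at hfH ⊢
                exact (subG_adj.mp hfH).1
            refine ⟨(wH.transfer G hHG).reverse, ?_⟩
            intro z hz
            rw [SimpleGraph.Walk.support_reverse, List.mem_reverse,
              SimpleGraph.Walk.support_transfer] at hz
            have hzA : z ∈ Aset G D x y := mem_Aset.mpr (reach_of_mem_support wH z hz)
            exact fun hzB => hBnA z hzB hzA
          · have huB : u' ∉ Bset G D x y := by
              intro huB
              have hKadj : (avoidG G (Aset G D x y)).Adj u' v' :=
                avoidG_adj.mpr ⟨h.symm, hBnA u' huB, hvA⟩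
              exact hvB (mem_Bset.mpr ((mem_Bset.mp huB).trans hKadj.reachable))
            obtain ⟨w', hw'⟩ := ih huB rfl
            refine ⟨SimpleGraph.Walk.cons h w', ?_⟩
            intro z hz
            rw [SimpleGraph.Walk.support_cons, List.mem_cons] at hz
            rcases hz with rfl | hz
            · exact hvB
            · exact hw' z hz
      intro v hv
      obtain ⟨w⟩ := hconn.preconnected v x
      exact claim w hv rfl
    -- `cutEdges G B` is a bond
    have hbond : IsBond G (cutEdges G (Bset G D x y)) := by
      refine ⟨⟨Bset G D x y, rfl⟩, ?_, ?_⟩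
      · intro h0
        rw [h0] at heF
        exact Set.notMem_empty _ heF
      · rintro C ⟨A₀, rfl⟩ hCne hCF
        have hyside : ∀ u ∈ Bset G D x y, (u ∈ A₀ ↔ y ∈ A₀) := by
          intro u hu
          obtain ⟨w, hw⟩ := hBwalk u hu
          refine (walk_side w ?_).symm
          intro f hf hfC
          obtain ⟨pp, qq, _, hpB, hqB, rfl⟩ := hCF hfC
          exact hqB (hw qq (SimpleGraph.Walk.snd_mem_support_of_mem_edges w hf))
        have hxside : ∀ v, v ∉ Bset G D x y → (v ∈ A₀ ↔ x ∈ A₀) := by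
          intro v hv
          obtain ⟨w, hw⟩ := hBcwalk v hv
          refine walk_side w ?_
          intro f hf hfC
          obtain ⟨pp, qq, _, hpB, hqB, rfl⟩ := hCF hfC
          exact hw pp (SimpleGraph.Walk.fst_mem_support_of_mem_edges w hf) hpB
        have hxyop : ¬ (y ∈ A₀ ↔ x ∈ A₀) := by
          obtain ⟨f, hfC⟩ := Set.nonempty_iff_ne_empty.mpr hCne
          obtain ⟨u, v, hadj, huB, hvB, heq⟩ := hCF hfC
          obtain ⟨pp, qq, _, hp, hq, heq'⟩ := hfC
          have hsides : ¬ (u ∈ A₀ ↔ v ∈ A₀) := by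
            rw [heq] at heq'
            rcases Sym2.eq_iff.mp heq' with ⟨rfl, rfl⟩ | ⟨rfl, rfl⟩
            · intro hiff; exact hq (hiff.mp hp)
            · intro hiff; exact hq (hiff.mpr hp)
          intro hiff
          exact hsides ((hyside u huB).trans (hiff.trans (hxside v hvB).symm))
        apply Set.Subset.antisymm hCF
        rintro g ⟨u, v, hadj, huB, hvB, rfl⟩
        apply mem_cutEdges_of_adj hadj
        intro hiff
        exact hxyop (((hyside u huB).symm.trans hiff).trans (hxside v hvB))
    obtain ⟨-, hEven⟩ := h _ hbond
    rw [hDF, Set.ncard_singleton] at hEven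
    exact Nat.not_even_one hEven
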